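/- Given an initial proposal vector I, if there exists any stable marriage G' with G' ≥ I, then there exists a unique least stable marriage H ≥ I, and moreover H minimizes the L1 distance ||H - I||₁ among all stable marriages that are ≥ I. -/

import Mathlib

open Finset

/-- A stable marriage instance: `m` men, `w` women, complete strict preference lists.
`mpref i k` is the woman at rank `k` (rank `0` = most preferred) on man `i`'s list.
`wrank q p` is the rank of man `p` on woman `q`'s list (smaller = more preferred). -/
structure SM (m w : ℕ) where
  mpref : Fin m → (Fin w ≃ Fin w)
  wrank : Fin w → Fin m → ℕ
  wrank_inj : ∀ q : Fin w, Function.Injective (wrank q)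

namespace SM

variable {m w : ℕ} (S : SM m w)

/-- The woman that man `i` proposes to in proposal vector `G`. -/
def rho (G : Fin m → Fin w) (i : Fin m) : Fin w := S.mpref i (G i)

/-- `(p, q)` is a blocking pair for proposal vector `G`: `p` strictly prefers `q` to the
woman he proposes to in `G`, and `q` strictly prefers `p` to every man proposing to
her in `G` (vacuously true if she receives no proposal in `G`). -/
def Blocking (G : Fin m → Fin w) (p : Fin m) (q : Fin w) : Prop :=
  (S.mpref p).symm q < G p ∧ ∀ j : Fin m, S.rho G j = q → S.wrank q p < S.wrank q j

/-- `G` is a man-saturating matching: all men propose to distinct women. -/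
def Saturating (G : Fin m → Fin w) : Prop := Function.Injective (S.rho G)

/-- `G` is a stable marriage: a man-saturating matching with no blocking pair. -/
def Stable (G : Fin m → Fin w) : Prop :=
  S.Saturating G ∧ ∀ p q, ¬ S.Blocking G p q

/-- `numw G`: the number of distinct women who receive a proposal in some proposal
vector less than or equal to `G` (i.e. women whose rank on some man `i`'s list
is at most `G i`). -/
def numw (G : Fin m → Fin w) : ℕ :=
  (Finset.univ.filter fun q : Fin w => ∃ i : Fin m, (S.mpref i).symm q ≤ G i).card

/-- Man `i` is forbidden in `G`: there is another man `j` such that either both propose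
to the same woman in `G` and she prefers `j`, or `(j, ρ(G,i))` is a blocking pair in `G`. -/
def Forbidden (G : Fin m → Fin w) (i : Fin m) : Prop :=
  ∃ j : Fin m, j ≠ i ∧
    ((S.rho G j = S.rho G i ∧ S.wrank (S.rho G i) j < S.wrank (S.rho G i) i) ∨
      S.Blocking G j (S.rho G i))

/-- Man `i` is rForbidden in `G`: there is a woman `q` whom `i` strictly prefers to his
current proposal and who strictly prefers `i` to every other man who has proposed to her
in any proposal vector `≤ G`. -/
def RForbidden (G : Fin m → Fin w) (i : Fin m) : Prop :=
  ∃ q : Fin w, (S.mpref i).symm q < G i ∧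
    ∀ j : Fin m, j ≠ i → (S.mpref j).symm q ≤ G j → S.wrank q i < S.wrank q j

end SM

/-- The `L¹` (Manhattan) distance between two proposal vectors. -/
def pdist {m w : ℕ} (G H : Fin m → Fin w) : ℕ :=
  ∑ i, Nat.dist (G i : ℕ) (H i : ℕ)

namespace SM

variable {m w : ℕ} (S : SM m w)

lemma rho_symm' (G : Fin m → Fin w) (i : Fin m) : (S.mpref i).symm (S.rho G i) = G i :=
  Equiv.symm_apply_apply _ _

/-- If `p` strictly prefers `q` to his `G`-partner and `G` is stable, then `q` has a
`G`-partner whom she strictly prefers to `p`. -/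
lemma exists_better' {G : Fin m → Fin w} (hG : S.Stable G) {p : Fin m} {q : Fin w}
    (hpq : (S.mpref p).symm q < G p) :
    ∃ j, S.rho G j = q ∧ S.wrank q j < S.wrank q p := by
  have hnb := hG.2 p q
  unfold SM.Blocking at hnb
  push_neg at hnb
  obtain ⟨j, hj, hle⟩ := hnb hpq
  refine ⟨j, hj, ?_⟩
  have hjp : j ≠ p := by
    rintro rfl
    rw [← hj, S.rho_symm'] at hpq
    exact lt_irrefl _ hpq
  have : S.wrank q j ≠ S.wrank q p := fun h => hjp (S.wrank_inj q h)
  omega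

/-- If man `i` is strictly better off in `H` than in `G` (both stable), then the
woman he proposes to in `H` has a `G`-partner who is also strictly better off in `H`. -/
lemma step' {G H : Fin m → Fin w} (hG : S.Stable G) (hH : S.Stable H) {i : Fin m}
    (hi : H i < G i) :
    ∃ k, S.rho G k = S.rho H i ∧ H k < G k := by
  set q := S.rho H i with hq
  have h1 : (S.mpref i).symm q < G i := by rw [hq, S.rho_symm']; exact hi
  obtain ⟨k, hk, hw⟩ := S.exists_better' hG h1
  refine ⟨k, hk, ?_⟩
  have hki : k ≠ i := by
    rintro rfl
    exact lt_irrefl _ hw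
  have hGk : (S.mpref k).symm q = G k := by rw [← hk, S.rho_symm']
  by_contra hcon
  push_neg at hcon
  rcases lt_or_eq_of_le hcon with hlt | heq
  · have hnb := hH.2 k q
    unfold SM.Blocking at hnb
    push_neg at hnb
    obtain ⟨j, hj, hjle⟩ := hnb (by rw [hGk]; exact hlt)
    have hji : j = i := hH.1 (hj.trans hq)
    subst hji
    omega
  · apply hki
    apply hH.1
    show S.mpref k (H k) = S.rho H i
    rw [← heq]
    exact hk.trans hq

/-- Crux: if `q`'s `G`-partner strictly prefers `H`, then `q`'s `H`-partner also
strictly prefers `H`. -/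
lemma crux' {G H : Fin m → Fin w} (hG : S.Stable G) (hH : S.Stable H)
    {j j' : Fin m} {q : Fin w} (hj : S.rho G j = q) (hjX : H j < G j)
    (hj' : S.rho H j' = q) : H j' < G j' := by
  classical
  set X : Finset (Fin m) := Finset.univ.filter (fun i => H i < G i) with hX
  set A : Finset (Fin w) := X.image (S.rho H) with hA
  set B : Finset (Fin w) := X.image (S.rho G) with hB
  have hAB : A ⊆ B := by
    intro q' hq'
    rw [hA, Finset.mem_image] at hq'
    obtain ⟨i, hiX, hiq⟩ := hq'
    rw [hX, Finset.mem_filter] at hiX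
    obtain ⟨k, hk, hkX⟩ := S.step' hG hH hiX.2
    rw [hB, Finset.mem_image]
    exact ⟨k, by rw [hX, Finset.mem_filter]; exact ⟨Finset.mem_univ _, hkX⟩, hk.trans hiq⟩
  have hcard : B.card ≤ A.card := by
    rw [hA, hB, Finset.card_image_of_injective _ hH.1, Finset.card_image_of_injective _ hG.1]
  have hBA : A = B := Finset.eq_of_subset_of_card_le hAB hcard
  have hqB : q ∈ B := by
    rw [hB, Finset.mem_image]
    exact ⟨j, by rw [hX, Finset.mem_filter]; exact ⟨Finset.mem_univ _, hjX⟩, hj⟩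
  rw [← hBA, hA, Finset.mem_image] at hqB
  obtain ⟨i, hiX, hiq⟩ := hqB
  have hij' : i = j' := hH.1 (hiq.trans hj'.symm)
  subst hij'
  rw [hX, Finset.mem_filter] at hiX
  exact hiX.2

/-- No two distinct men `i, j` can have `G i = min` side pointing at the same woman. -/
lemma sat_aux' {G H : Fin m → Fin w} (hG : S.Stable G) (hH : S.Stable H)
    {i j : Fin m} {q : Fin w} (h1 : S.rho G i = q) (h2 : S.rho H j = q)
    (hi : G i ≤ H i) (hj : H j ≤ G j) (hij : i ≠ j) : False := by
  have hi' : G i < H i := by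
    rcases lt_or_eq_of_le hi with hlt | heq
    · exact hlt
    · exfalso
      apply hij
      apply hH.1
      show S.mpref i (H i) = S.mpref j (H j)
      rw [← heq]
      show S.rho G i = S.rho H j
      rw [h1, h2]
  have hj' : H j < G j := by
    rcases lt_or_eq_of_le hj with hlt | heq
    · exact hlt
    · exfalso
      apply hij
      apply hG.1
      show S.mpref i (G i) = S.mpref j (G j)
      rw [← heq]
      show S.rho G i = S.rho H j
      rw [h1, h2]
  have hne : S.wrank q i ≠ S.wrank q j := fun hh => hij (S.wrank_inj q hh)
  rcases lt_or_gt_of_ne hne with hlt | hgt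
  · -- (i, q) blocks H
    apply hH.2 i q
    constructor
    · rw [← h1, S.rho_symm']; exact hi'
    · intro k hk
      have : k = j := hH.1 (hk.trans h2.symm)
      subst this
      exact hlt
  · -- (j, q) blocks G
    apply hG.2 j q
    constructor
    · rw [← h2, S.rho_symm']; exact hj'
    · intro k hk
      have : k = i := hG.1 (hk.trans h1.symm)
      subst this
      exact hgt

/-- The pointwise min of two stable proposal vectors is stable. -/
lemma stable_min' {G H : Fin m → Fin w} (hG : S.Stable G) (hH : S.Stable H) :
    S.Stable (fun i => min (G i) (H i)) := by
  set K : Fin m → Fin w := fun i => min (G i) (H i) with hK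
  have hKG : ∀ i, G i ≤ H i → S.rho K i = S.rho G i := by
    intro i hi
    show S.mpref i (K i) = S.mpref i (G i)
    rw [hK]
    simp [min_eq_left hi]
  have hKH : ∀ i, H i ≤ G i → S.rho K i = S.rho H i := by
    intro i hi
    show S.mpref i (K i) = S.mpref i (H i)
    rw [hK]
    simp [min_eq_right hi]
  constructor
  · intro i j hijeq
    by_contra hne
    rcases le_total (G i) (H i) with hi | hi <;> rcases le_total (G j) (H j) with hj | hj
    · exact hne (hG.1 (((hKG i hi).symm.trans hijeq).trans (hKG j hj)))
    · exact S.sat_aux' hG hH (q := S.rho K j) ((hKG i hi).symm.trans hijeq) (hKH j hj).symm hi hj hne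
    · exact S.sat_aux' hG hH (q := S.rho K i) ((hKG j hj).symm.trans hijeq.symm)
        (hKH i hi).symm hj hi (Ne.symm hne)
    · exact hne (hH.1 (((hKH i hi).symm.trans hijeq).trans (hKH j hj)))
  · rintro p q ⟨h1, h2⟩
    have h1G : (S.mpref p).symm q < G p := lt_of_lt_of_le h1 (min_le_left _ _)
    have h1H : (S.mpref p).symm q < H p := lt_of_lt_of_le h1 (min_le_right _ _)
    obtain ⟨j, hjq, hjw⟩ := S.exists_better' hG h1G
    obtain ⟨j', hj'q, hj'w⟩ := S.exists_better' hH h1H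
    have hjX : H j < G j := by
      by_contra hc
      push_neg at hc
      have := h2 j (by rw [hKG j hc]; exact hjq)
      omega
    have hj'Y : ¬ H j' < G j' := by
      intro hc
      have := h2 j' (by rw [hKH j' (le_of_lt hc)]; exact hj'q)
      omega
    exact hj'Y (S.crux' hG hH hjq hjX hj'q)

end SM

/-- If some stable marriage lies above `I`, then there is a unique least stable marriage
`H ≥ I`, and `H` minimizes the `L¹` distance to `I` among all stable marriages `≥ I`. -/
theorem stmt10 {m w : ℕ} (S : SM m w) (I : Fin m → Fin w)
    (h : ∃ G' : Fin m → Fin w, S.Stable G' ∧ I ≤ G') :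
    ∃ H : Fin m → Fin w, S.Stable H ∧ I ≤ H ∧
      (∀ G' : Fin m → Fin w, S.Stable G' → I ≤ G' → H ≤ G') ∧
      (∀ G' : Fin m → Fin w, S.Stable G' → I ≤ G' → pdist I H ≤ pdist I G') ∧
      (∀ H' : Fin m → Fin w,
        (S.Stable H' ∧ I ≤ H' ∧ ∀ G' : Fin m → Fin w, S.Stable G' → I ≤ G' → H' ≤ G') →
        H' = H) := by
  classical
  obtain ⟨G0, hG0, hIG0⟩ := h
  set T : Finset (Fin m → Fin w) :=
    Finset.univ.filter (fun G' => S.Stable G' ∧ I ≤ G') with hT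
  have hmemT : ∀ G', G' ∈ T ↔ S.Stable G' ∧ I ≤ G' := by
    intro G'
    rw [hT, Finset.mem_filter]
    simp
  have hne : T.Nonempty := ⟨G0, (hmemT G0).2 ⟨hG0, hIG0⟩⟩
  obtain ⟨H, hHT, hmin⟩ := T.exists_minimal hne
  obtain ⟨hHs, hIH⟩ := (hmemT H).1 hHT
  have hleast : ∀ G', S.Stable G' → I ≤ G' → H ≤ G' := by
    intro G' hs hle
    set K : Fin m → Fin w := fun i => min (H i) (G' i) with hK
    have hKT : K ∈ T := (hmemT K).2 ⟨S.stable_min' hHs hs,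
      fun i => le_min (hIH i) (hle i)⟩
    have hKH : K ≤ H := fun i => min_le_left _ _
    have hEq : K = H := by
      by_contra hne'
      exact hne' (le_antisymm hKH (hmin hKT hKH))
    intro i
    calc H i = K i := by rw [hEq]
    _ ≤ G' i := min_le_right _ _
  refine ⟨H, hHs, hIH, hleast, ?_, ?_⟩
  · intro G' hs hle
    unfold pdist
    apply Finset.sum_le_sum
    intro i _
    have h1 : (I i : ℕ) ≤ (H i : ℕ) := hIH i
    have h2 : (H i : ℕ) ≤ (G' i : ℕ) := hleast G' hs hle i
    simp only [Nat.dist]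
    omega
  · rintro H' ⟨hs, hle, hl⟩
    exact le_antisymm (hl H hHs hIH) (hleast H' hs hle)
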